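/- Let N be a P-coverable Petri net and Q a nonempty set of P-components of N. Then every P-component of the Q-projection N↾(∪Q) is a P-component of N, and Q consists of P-components of N↾(∪Q); in particular N↾(∪Q) has a P-cover. -/

import Mathlib

open scoped Classical

/-- A Petri net over places `P` and transitions `T`, given by the pre-set and
post-set of each transition (encoding the flow relation `F`). -/
structure PetriNet (P T : Type) where
  pre : T → Set P
  post : T → Set P

namespace PetriNet

variable {P T : Type}

/-- Transition `t` is enabled at marking `M`. -/
def enabled (N : PetriNet P T) (M : P → ℕ) (t : T) : Prop :=
  ∀ p ∈ N.pre t, 1 ≤ M p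

/-- The marking obtained by firing `t` at `M`. -/
noncomputable def fire (N : PetriNet P T) (M : P → ℕ) (t : T) : P → ℕ :=
  fun p => M p - (if p ∈ N.pre t then 1 else 0) + (if p ∈ N.post t then 1 else 0)

/-- `Fires N M σ M'`: the firing sequence `σ` is executable at `M` and leads to `M'`. -/
inductive Fires (N : PetriNet P T) : (P → ℕ) → List T → (P → ℕ) → Prop
  | nil (M : P → ℕ) : Fires N M [] M
  | cons {M M'' : P → ℕ} {t : T} {σ : List T} :
      N.enabled M t → Fires N (N.fire M t) σ M'' → Fires N M (t :: σ) M''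

/-- `M'` is reachable from `M` in `N`. -/
def Reach (N : PetriNet P T) (M M' : P → ℕ) : Prop := ∃ σ, Fires N M σ M'

/-- The set of transitions enabled at `M`. -/
def enabledSet (N : PetriNet P T) (M : P → ℕ) : Set T := {t | N.enabled M t}

/-- `(N,M)` is lucent: distinct reachable markings enable distinct transition sets. -/
def Lucent (N : PetriNet P T) (M : P → ℕ) : Prop :=
  ∀ M1 M2, Reach N M M1 → Reach N M M2 →
    enabledSet N M1 = enabledSet N M2 → M1 = M2

/-- `(N,M)` is bounded. -/
def Bounded (N : PetriNet P T) (M : P → ℕ) : Prop :=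
  ∃ k, ∀ M', Reach N M M' → ∀ p, M' p ≤ k

/-- `(N,M)` is live. -/
def Live (N : PetriNet P T) (M : P → ℕ) : Prop :=
  ∀ M', Reach N M M' → ∀ t, ∃ M'', Reach N M' M'' ∧ N.enabled M'' t

/-- `MH` is a home marking of `(N,M)`. -/
def HomeMarking (N : PetriNet P T) (M MH : P → ℕ) : Prop :=
  ∀ M', Reach N M M' → Reach N M' MH

/-- A net is well-formed if some marking makes it live and bounded. -/
def WellFormed (N : PetriNet P T) : Prop := ∃ M, Live N M ∧ Bounded N M

/-- `N` is a free-choice net. -/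
def FreeChoice (N : PetriNet P T) : Prop :=
  ∀ t1 t2 : T, N.pre t1 = N.pre t2 ∨ N.pre t1 ∩ N.pre t2 = ∅

/-- A set of nodes is cluster-closed: with a place it contains all its output
transitions, and with a transition all its input places. -/
def ClusterClosed (N : PetriNet P T) (X : Set (P ⊕ T)) : Prop :=
  (∀ p, Sum.inl p ∈ X → ∀ t, p ∈ N.pre t → Sum.inr t ∈ X) ∧
  (∀ t, Sum.inr t ∈ X → ∀ p, p ∈ N.pre t → Sum.inl p ∈ X)

/-- The cluster of a node `x`: the smallest cluster-closed set containing `x`. -/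
def cluster (N : PetriNet P T) (x : P ⊕ T) : Set (P ⊕ T) :=
  ⋂₀ {X | x ∈ X ∧ ClusterClosed N X}

/-- The set of clusters of `N`. -/
def clusters (N : PetriNet P T) : Set (Set (P ⊕ T)) :=
  {C | ∃ x, C = cluster N x}

/-- `C` is a cluster of `N`. -/
def IsCluster (N : PetriNet P T) (C : Set (P ⊕ T)) : Prop := ∃ x, C = cluster N x

/-- The transitions of a set of nodes. -/
def transOf (C : Set (P ⊕ T)) : Set T := {t | Sum.inr t ∈ C}

/-- `M(C)`: one token on each place of `C`. -/
noncomputable def clusterMarking (C : Set (P ⊕ T)) : P → ℕ :=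
  fun p => if Sum.inl p ∈ C then 1 else 0

/-- `C` is a home cluster of `(N,M)`. -/
def HomeCluster (N : PetriNet P T) (M : P → ℕ) (C : Set (P ⊕ T)) : Prop :=
  IsCluster N C ∧ HomeMarking N M (clusterMarking C)

/-- `(N,M)` is perpetual: live, bounded, with a home cluster. -/
def Perpetual (N : PetriNet P T) (M : P → ℕ) : Prop :=
  Live N M ∧ Bounded N M ∧ ∃ C, HomeCluster N M C

/-- `•R`: transitions with an output place in `R`. -/
def preT (N : PetriNet P T) (R : Set P) : Set T := {t | ∃ p ∈ R, p ∈ N.post t}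

/-- `R•`: transitions with an input place in `R`. -/
def postT (N : PetriNet P T) (R : Set P) : Set T := {t | ∃ p ∈ R, p ∈ N.pre t}

/-- `R` is a siphon. -/
def Siphon (N : PetriNet P T) (R : Set P) : Prop := preT N R ⊆ postT N R

/-- `R` is a trap. -/
def Trap (N : PetriNet P T) (R : Set P) : Prop := postT N R ⊆ preT N R

/-- The arcs of `N` restricted to the node set `X`. -/
def subnetEdge (N : PetriNet P T) (X : Set (P ⊕ T)) : (P ⊕ T) → (P ⊕ T) → Prop :=
  fun a b => a ∈ X ∧ b ∈ X ∧
    ((∃ p t, a = Sum.inl p ∧ b = Sum.inr t ∧ p ∈ N.pre t) ∨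
     (∃ t p, a = Sum.inr t ∧ b = Sum.inl p ∧ p ∈ N.post t))

/-- `X` is (the node set of) a P-component of `N`: closed under neighbors of its
places, every transition has exactly one input and one output place inside it,
and its subnet is strongly connected. -/
def PComponent (N : PetriNet P T) (X : Set (P ⊕ T)) : Prop :=
  X.Nonempty ∧
  (∀ p, Sum.inl p ∈ X → ∀ t, (p ∈ N.pre t ∨ p ∈ N.post t) → Sum.inr t ∈ X) ∧
  (∀ t, Sum.inr t ∈ X →
    (∃! p, p ∈ N.pre t ∧ Sum.inl p ∈ X) ∧ (∃! p, p ∈ N.post t ∧ Sum.inl p ∈ X)) ∧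
  (∀ a ∈ X, ∀ b ∈ X, Relation.ReflTransGen (subnetEdge N X) a b)

/-- `N` has a P-cover. -/
def PCover (N : PetriNet P T) : Prop :=
  ∀ x : P ⊕ T, ∃ X, PComponent N X ∧ x ∈ X

/-- Total number of tokens of `M` on the places of `X`. -/
noncomputable def tokenCount [Fintype P] (X : Set (P ⊕ T)) (M : P → ℕ) : ℕ :=
  ∑ p : P, if Sum.inl p ∈ X then M p else 0

/-- `(N,M)` is locally safe: every P-component carries at most one token in
every reachable marking. -/
def LocallySafe [Fintype P] (N : PetriNet P T) (M : P → ℕ) : Prop :=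
  ∀ X, PComponent N X → ∀ M', Reach N M M' → tokenCount X M' ≤ 1

/-- The subnet of `N` generated by the node set `U`. -/
def restrict (N : PetriNet P T) (U : Set (P ⊕ T)) :
    PetriNet {p // Sum.inl p ∈ U} {t // Sum.inr t ∈ U} where
  pre t := {p | p.1 ∈ N.pre t.1}
  post t := {p | p.1 ∈ N.post t.1}

/-- Inclusion of the nodes of the subnet generated by `U` into the nodes of `N`. -/
def mapNode (U : Set (P ⊕ T)) :
    ({p // Sum.inl p ∈ U} ⊕ {t // Sum.inr t ∈ U}) → (P ⊕ T)
  | .inl p => .inl p.1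
  | .inr t => .inr t.1

/-- The flow relation of `N` as an edge relation on nodes. -/
def flowEdge (N : PetriNet P T) : (P ⊕ T) → (P ⊕ T) → Prop
  | .inl p, .inr t => p ∈ N.pre t
  | .inr t, .inl p => p ∈ N.post t
  | _, _ => False

/-- `N` is a workflow net with source `i` and sink `o`. -/
def IsWorkflowNet (N : PetriNet P T) (i o : P) : Prop :=
  (∀ t, i ∉ N.post t) ∧ (∀ t, o ∉ N.pre t) ∧
  (∀ x : P ⊕ T, Relation.ReflTransGen (flowEdge N) (Sum.inl i) x ∧
    Relation.ReflTransGen (flowEdge N) x (Sum.inl o))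

/-- The short-circuited net: a fresh transition `t*` from `o` to `i`. -/
def shortCircuit (N : PetriNet P T) (i o : P) : PetriNet P (T ⊕ Unit) where
  pre t := match t with | .inl t => N.pre t | .inr _ => {o}
  post t := match t with | .inl t => N.post t | .inr _ => {i}

/-- The marking `[p]` with a single token on `p`. -/
noncomputable def unitMarking (p : P) : P → ℕ := fun q => if q = p then 1 else 0

/-- A workflow net is sound iff its short-circuited net marked with `[i]`
is live and bounded. -/
def Sound (N : PetriNet P T) (i o : P) : Prop :=
  Live (shortCircuit N i o) (unitMarking i) ∧ Bounded (shortCircuit N i o) (unitMarking i)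

/-- `AltPath N p0 [(t1,p1),...,(tn,pn)]` encodes the path `⟨p0,t1,p1,...,tn,pn⟩`
in `N`, alternating between places and transitions along the flow relation. -/
inductive AltPath (N : PetriNet P T) : P → List (T × P) → Prop
  | nil (p : P) : AltPath N p []
  | cons {p q : P} {t : T} {l : List (T × P)} :
      p ∈ N.pre t → q ∈ N.post t → AltPath N q l → AltPath N p ((t, q) :: l)

end PetriNet

open PetriNet


namespace PetriNet

variable {P T : Type}

/-- Lift a node of `N` that lies in `U` to a node of the subnet generated by `U`. -/
def liftNode (U : Set (P ⊕ T)) : (x : P ⊕ T) → x ∈ U →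
    ({p // Sum.inl p ∈ U} ⊕ {t // Sum.inr t ∈ U})
  | .inl p, h => .inl ⟨p, h⟩
  | .inr t, h => .inr ⟨t, h⟩

lemma mapNode_liftNode (U : Set (P ⊕ T)) (x : P ⊕ T) (h : x ∈ U) :
    mapNode U (liftNode U x h) = x := by cases x <;> rfl

lemma liftNode_mapNode (U : Set (P ⊕ T)) (a : {p // Sum.inl p ∈ U} ⊕ {t // Sum.inr t ∈ U})
    (h : mapNode U a ∈ U) : liftNode U (mapNode U a) h = a := by cases a <;> rfl

lemma mapNode_mem (U : Set (P ⊕ T)) (a : {p // Sum.inl p ∈ U} ⊕ {t // Sum.inr t ∈ U}) :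
    mapNode U a ∈ U := by cases a with
  | inl p => exact p.2
  | inr t => exact t.2

lemma subnetEdge_map {N : PetriNet P T} {U : Set (P ⊕ T)}
    {Y : Set ({p // Sum.inl p ∈ U} ⊕ {t // Sum.inr t ∈ U})} {a b}
    (h : subnetEdge (N.restrict U) Y a b) :
    subnetEdge N (mapNode U '' Y) (mapNode U a) (mapNode U b) := by
  obtain ⟨ha, hb, h⟩ := h
  refine ⟨⟨a, ha, rfl⟩, ⟨b, hb, rfl⟩, ?_⟩
  rcases h with ⟨p, t, rfl, rfl, hpt⟩ | ⟨t, p, rfl, rfl, hpt⟩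
  · exact Or.inl ⟨p.1, t.1, rfl, rfl, hpt⟩
  · exact Or.inr ⟨t.1, p.1, rfl, rfl, hpt⟩

lemma subnetEdge_lift {N : PetriNet P T} {U X : Set (P ⊕ T)} (hXU : X ⊆ U) {x y : P ⊕ T}
    (h : subnetEdge N X x y) (hx : x ∈ U) (hy : y ∈ U) :
    subnetEdge (N.restrict U) (mapNode U ⁻¹' X) (liftNode U x hx) (liftNode U y hy) := by
  obtain ⟨hxX, hyX, h⟩ := h
  refine ⟨?_, ?_, ?_⟩
  · simpa [Set.mem_preimage, mapNode_liftNode] using hxX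
  · simpa [Set.mem_preimage, mapNode_liftNode] using hyX
  · rcases h with ⟨p, t, rfl, rfl, hpt⟩ | ⟨t, p, rfl, rfl, hpt⟩
    · exact Or.inl ⟨⟨p, hx⟩, ⟨t, hy⟩, rfl, rfl, hpt⟩
    · exact Or.inr ⟨⟨t, hx⟩, ⟨p, hy⟩, rfl, rfl, hpt⟩

lemma rtg_lift {N : PetriNet P T} {U X : Set (P ⊕ T)} (hXU : X ⊆ U) {x y : P ⊕ T}
    (h : Relation.ReflTransGen (subnetEdge N X) x y) (hx : x ∈ U) (hy : y ∈ U) :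
    Relation.ReflTransGen (subnetEdge (N.restrict U) (mapNode U ⁻¹' X))
      (liftNode U x hx) (liftNode U y hy) := by
  revert hy
  induction h with
  | refl => intro hy; cases x <;> exact Relation.ReflTransGen.refl
  | @tail c d h e ih =>
      intro hy
      exact Relation.ReflTransGen.tail (ih (hXU e.1)) (subnetEdge_lift hXU e (hXU e.1) hy)

end PetriNet

/-- Components of a Q-projection are components of the original net,
the members of Q remain components of the projection, and the projection has a P-cover. -/
theorem partial_pCover_projection {P T : Type} [Fintype P] [Fintype T]
    (N : PetriNet P T) (hcov : PCover N)
    (Q : Set (Set (P ⊕ T))) (hne : Q.Nonempty) (hQ : ∀ X ∈ Q, PComponent N X) :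
    (∀ Y, PComponent (N.restrict (⋃₀ Q)) Y → PComponent N (mapNode (⋃₀ Q) '' Y)) ∧
    (∀ X ∈ Q, PComponent (N.restrict (⋃₀ Q)) (mapNode (⋃₀ Q) ⁻¹' X)) ∧
    PCover (N.restrict (⋃₀ Q)) := by
  classical
  set U : Set (P ⊕ T) := ⋃₀ Q with hU
  have hclosU : ∀ p : P, Sum.inl p ∈ U → ∀ t : T,
      (p ∈ N.pre t ∨ p ∈ N.post t) → Sum.inr t ∈ U := by
    rintro p ⟨X, hXQ, hpX⟩ t ht
    exact ⟨X, hXQ, (hQ X hXQ).2.1 p hpX t ht⟩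
  have part1 : ∀ Y, PComponent (N.restrict U) Y → PComponent N (mapNode U '' Y) := by
    intro Y hY
    obtain ⟨⟨y, hy⟩, hclose, htrans, hconn⟩ := hY
    refine ⟨⟨mapNode U y, ⟨y, hy, rfl⟩⟩, ?_, ?_, ?_⟩
    · rintro p ⟨a, haY, hae⟩ t ht
      cases a with
      | inl p' =>
          have hp : p'.1 = p := by simpa [mapNode] using hae
          subst hp
          have htU : Sum.inr t ∈ U := hclosU p'.1 p'.2 t ht
          refine ⟨Sum.inr ⟨t, htU⟩, ?_, rfl⟩
          exact hclose p' haY ⟨t, htU⟩ (by simpa [restrict] using ht)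
      | inr t' => simp [mapNode] at hae
    · rintro t ⟨a, haY, hae⟩
      cases a with
      | inl p' => simp [mapNode] at hae
      | inr t' =>
          have ht : t'.1 = t := by simpa [mapNode] using hae
          subst ht
          obtain ⟨⟨p1, hp1, hp1u⟩, ⟨p2, hp2, hp2u⟩⟩ := htrans t' haY
          constructor
          · refine ⟨p1.1, ⟨hp1.1, ⟨Sum.inl p1, hp1.2, rfl⟩⟩, ?_⟩
            rintro q ⟨hqpre, b, hbY, hbe⟩
            cases b with
            | inl q' =>
                have hq : q'.1 = q := by simpa [mapNode] using hbe
                subst hq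
                have := hp1u q' ⟨hqpre, hbY⟩
                exact congrArg Subtype.val this
            | inr _ => simp [mapNode] at hbe
          · refine ⟨p2.1, ⟨hp2.1, ⟨Sum.inl p2, hp2.2, rfl⟩⟩, ?_⟩
            rintro q ⟨hqpost, b, hbY, hbe⟩
            cases b with
            | inl q' =>
                have hq : q'.1 = q := by simpa [mapNode] using hbe
                subst hq
                have := hp2u q' ⟨hqpost, hbY⟩
                exact congrArg Subtype.val this
            | inr _ => simp [mapNode] at hbe
    · rintro a ⟨a', ha', rfl⟩ b ⟨b', hb', rfl⟩
      exact Relation.ReflTransGen.lift (mapNode U) (fun _ _ h => subnetEdge_map h)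
        _ _ (hconn a' ha' b' hb')
  have part2 : ∀ X ∈ Q, PComponent (N.restrict U) (mapNode U ⁻¹' X) := by
    intro X hXQ
    obtain ⟨⟨x, hx⟩, hclose, htrans, hconn⟩ := hQ X hXQ
    have hXU : X ⊆ U := fun z hz => ⟨X, hXQ, hz⟩
    refine ⟨⟨liftNode U x (hXU hx), ?_⟩, ?_, ?_, ?_⟩
    · show mapNode U _ ∈ X
      rw [mapNode_liftNode]; exact hx
    · intro p hp t ht
      exact hclose p.1 hp t.1 (by simpa [restrict] using ht)
    · intro t ht
      obtain ⟨⟨p1, hp1, hp1u⟩, ⟨p2, hp2, hp2u⟩⟩ := htrans t.1 ht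
      constructor
      · refine ⟨⟨p1, hXU hp1.2⟩, ⟨hp1.1, hp1.2⟩, ?_⟩
        rintro q ⟨hqpre, hqX⟩
        exact Subtype.ext (hp1u q.1 ⟨hqpre, hqX⟩)
      · refine ⟨⟨p2, hXU hp2.2⟩, ⟨hp2.1, hp2.2⟩, ?_⟩
        rintro q ⟨hqpost, hqX⟩
        exact Subtype.ext (hp2u q.1 ⟨hqpost, hqX⟩)
    · intro a ha b hb
      have := rtg_lift hXU (hconn (mapNode U a) ha (mapNode U b) hb)
        (mapNode_mem U a) (mapNode_mem U b)
      rwa [liftNode_mapNode, liftNode_mapNode] at this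
  refine ⟨part1, part2, ?_⟩
  intro a
  obtain ⟨X, hXQ, haX⟩ := mapNode_mem U a
  exact ⟨mapNode U ⁻¹' X, part2 X hXQ, haX⟩
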